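/- Let X = Y = [0,1] and let μ be the Lebesgue measure on [0,1]. For each integer n ≥ 1 define r_n : [0,1] → [0,1] by r_n(x) := ⌊2^n x⌋ mod 2, and let ρ^n := (id, r_n)_♯ μ be the pushforward of μ under x ↦ (x, r_n(x)), a probability measure on [0,1]² with first marginal μ. Then 𝒲(ρ^n, ρ^m) = 1/2 for all n ≠ m; in particular the sequence (ρ^n)_n has no 𝒲-Cauchy subsequence, so the metric space (Π(μ), 𝒲) is not compact. -/

import Mathlib

open MeasureTheory Set Filter
open scoped ENNReal Classical
open ProbabilityTheory

noncomputable section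

/-- Optimal-transport cost with cost function `c`. -/
noncomputable def OTC {A B : Type*} [MeasurableSpace A] [MeasurableSpace B]
    (c : A → B → ℝ≥0∞) (α : Measure A) (β : Measure B) : ℝ≥0∞ :=
  ⨅ (γ : Measure (A × B)) (_ : γ.map Prod.fst = α) (_ : γ.map Prod.snd = β),
    ∫⁻ p, c p.1 p.2 ∂γ

/-- Wasserstein-1 distance. -/
noncomputable def W1 {S : Type*} [MeasurableSpace S] [PseudoEMetricSpace S]
    (α β : Measure S) : ℝ≥0∞ :=
  OTC edist α β

/-- Disintegration (conditional kernel) of a measure on a product space. -/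
noncomputable def disint {α Ω : Type*} [MeasurableSpace α] [MeasurableSpace Ω]
    [StandardBorelSpace Ω] [Nonempty Ω] (π : Measure (α × Ω)) (x : α) : Measure Ω :=
  if h : IsFiniteMeasure π then
    haveI := h
    Measure.condKernel π x
  else 0

/-- The vertical transport metric `𝒲(π, π') = ∫ W_Y(π_x, π'_x) dμ(x)`. -/
noncomputable def VW {α Ω : Type*} [MeasurableSpace α] [MeasurableSpace Ω] [PseudoEMetricSpace Ω]
    [StandardBorelSpace Ω] [Nonempty Ω]
    (μ : Measure α) (π π' : Measure (α × Ω)) : ℝ≥0∞ :=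
  ∫⁻ x, W1 (disint π x) (disint π' x) ∂μ

/-- `r_n(x) = ⌊2^n x⌋ mod 2`. -/
noncomputable def rad (n : ℕ) (x : ℝ) : ℝ := ((⌊(2:ℝ)^n * x⌋ % 2 : ℤ) : ℝ)

/-- `ρ^n = (id, r_n)_♯ (Leb ↾ [0,1])`. -/
noncomputable def rho15 (n : ℕ) : Measure (ℝ × ℝ) :=
  (volume.restrict (Icc (0:ℝ) 1)).map fun x => (x, rad n x)

/-! ### Auxiliary lemmas -/

lemma rad_meas (n : ℕ) : Measurable (rad n) := by
  have h1 : Measurable fun x : ℝ => ⌊(2:ℝ)^n * x⌋ :=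
    Int.measurable_floor.comp (measurable_const_mul _)
  exact (measurable_from_top (f := fun z : ℤ => ((z % 2 : ℤ) : ℝ))).comp h1

lemma rad_mem (n : ℕ) (x : ℝ) : rad n x = 0 ∨ rad n x = 1 := by
  unfold rad
  rcases Int.emod_two_eq ⌊(2:ℝ)^n * x⌋ with h | h <;> rw [h] <;> simp

lemma W1_dirac (a b : ℝ) : W1 (Measure.dirac a) (Measure.dirac b) = edist a b := by
  have hmeas : Measurable fun p : ℝ × ℝ => edist p.1 p.2 :=
    measurable_fst.edist measurable_snd
  apply le_antisymm
  · have h1 : (Measure.dirac ((a, b) : ℝ × ℝ)).map Prod.fst = Measure.dirac a :=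
      Measure.map_dirac' measurable_fst _
    have h2 : (Measure.dirac ((a, b) : ℝ × ℝ)).map Prod.snd = Measure.dirac b :=
      Measure.map_dirac' measurable_snd _
    calc W1 (Measure.dirac a) (Measure.dirac b)
        ≤ ∫⁻ p, edist p.1 p.2 ∂(Measure.dirac ((a, b) : ℝ × ℝ)) :=
          iInf_le_of_le _ (iInf_le_of_le h1 (iInf_le_of_le h2 le_rfl))
      _ = edist a b := lintegral_dirac' _ hmeas
  · refine le_iInf fun γ => le_iInf fun h1 => le_iInf fun h2 => ?_
    have hfst : γ (Prod.fst ⁻¹' ({a}ᶜ : Set ℝ)) = 0 := by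
      rw [← Measure.map_apply measurable_fst (measurableSet_singleton a).compl, h1]
      simp
    have hsnd : γ (Prod.snd ⁻¹' ({b}ᶜ : Set ℝ)) = 0 := by
      rw [← Measure.map_apply measurable_snd (measurableSet_singleton b).compl, h2]
      simp
    have hnull : γ ({((a, b) : ℝ × ℝ)}ᶜ) = 0 := by
      refine measure_mono_null ?_ (measure_union_null hfst hsnd)
      intro p hp
      by_contra hc
      simp only [mem_union, mem_preimage, mem_compl_iff, mem_singleton_iff, not_or,
        not_not] at hc ⊢
      exact hp (Prod.ext hc.1 hc.2)
    have hae : ∀ᵐ p ∂γ, edist p.1 p.2 = edist a b := by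
      rw [ae_iff]
      refine measure_mono_null (fun p hp => ?_) hnull
      simp only [mem_compl_iff, mem_singleton_iff]
      intro hpe; subst hpe; simp at hp
    have huniv : γ univ = 1 := by
      have : (γ.map Prod.fst) univ = γ univ := by
        rw [Measure.map_apply measurable_fst MeasurableSet.univ]; rfl
      rw [← this, h1]; simp
    rw [lintegral_congr_ae hae, lintegral_const, huniv, mul_one]

lemma prob_restrict : IsProbabilityMeasure (volume.restrict (Icc (0:ℝ) 1)) := by
  constructor
  simp [Real.volume_Icc]

lemma rho15_prob (n : ℕ) : IsProbabilityMeasure (rho15 n) := by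
  haveI := prob_restrict
  exact Measure.isProbabilityMeasure_map (measurable_id.prodMk (rad_meas n)).aemeasurable

lemma compProd_det (μ : Measure ℝ) [SFinite μ] (f : ℝ → ℝ) (hf : Measurable f) :
    μ ⊗ₘ Kernel.deterministic f hf = μ.map fun x => (x, f x) := by
  ext s hs
  rw [Measure.compProd_apply hs, Measure.map_apply
    (show Measurable fun x : ℝ => (x, f x) from measurable_id.prodMk hf) hs]
  have : ∀ a, Kernel.deterministic f hf a (Prod.mk a ⁻¹' s) =
      ((fun x => (x, f x)) ⁻¹' s).indicator 1 a := by
    intro a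
    rw [Kernel.deterministic_apply' hf a (measurable_prodMk_left hs)]
    by_cases h : (a, f a) ∈ s <;> simp [indicator, h]
  simp_rw [this]
  rw [lintegral_indicator_one
    ((show Measurable fun x : ℝ => (x, f x) from measurable_id.prodMk hf) hs)]

lemma rho15_fst (n : ℕ) : (rho15 n).fst = volume.restrict (Icc (0:ℝ) 1) := by
  rw [rho15, Measure.fst_map_prodMk (rad_meas n)]
  exact Measure.map_id

lemma disint_ae (n : ℕ) :
    ∀ᵐ x ∂(volume.restrict (Icc (0:ℝ) 1)),
      disint (rho15 n) x = Measure.dirac (rad n x) := by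
  haveI := rho15_prob n
  have hκ : rho15 n =
      (rho15 n).fst ⊗ₘ Kernel.deterministic (rad n) (rad_meas n) := by
    rw [rho15_fst, compProd_det]
    rfl
  have := eq_condKernel_of_measure_eq_compProd (ρ := rho15 n)
    (Kernel.deterministic (rad n) (rad_meas n)) hκ
  rw [rho15_fst] at this
  filter_upwards [this] with x hx
  rw [disint, dif_pos (by infer_instance), ← hx,
    Kernel.deterministic_apply]

/-! ### Dyadic intervals -/

def dyI (m k : ℕ) : Set ℝ := Ico ((k : ℝ) / 2 ^ m) (((k : ℝ) + 1) / 2 ^ m)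

lemma rad_on_dyI {n m k : ℕ} (hnm : n ≤ m) {x : ℝ} (hx : x ∈ dyI m k) :
    rad n x = ((k / 2 ^ (m - n)) % 2 : ℕ) := by
  set d := m - n with hd
  set q := k / 2 ^ d with hq
  have h2d : (0:ℝ) < 2 ^ d := by positivity
  have h2m : (2:ℝ) ^ m = 2 ^ n * 2 ^ d := by rw [← pow_add]; congr 1; omega
  obtain ⟨hx1, hx2⟩ := hx
  have hnat1 : q * 2 ^ d ≤ k := Nat.div_mul_le_self _ _
  have hnat2 : k + 1 ≤ 2 ^ d * (q + 1) := by
    have h1 := Nat.div_add_mod k (2 ^ d)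
    have h2 := Nat.mod_lt k (show 0 < 2 ^ d from Nat.pow_pos (by norm_num))
    rw [← hq] at h1
    have h3 : 2 ^ d * (q + 1) = 2 ^ d * q + 2 ^ d := by ring
    omega
  have hA : (q : ℝ) * 2 ^ d ≤ k := by exact_mod_cast hnat1
  have hB : (k : ℝ) + 1 ≤ 2 ^ d * ((q : ℝ) + 1) := by exact_mod_cast hnat2
  have hx1' : (k : ℝ) ≤ x * 2 ^ m := by rwa [div_le_iff₀ (by positivity)] at hx1
  have hx2' : x * 2 ^ m < (k : ℝ) + 1 := by rwa [lt_div_iff₀ (by positivity)] at hx2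
  have hkey : (2:ℝ) ^ n * x * 2 ^ d = x * 2 ^ m := by rw [h2m]; ring
  have hfloor : ⌊(2:ℝ) ^ n * x⌋ = (q : ℤ) := by
    rw [Int.floor_eq_iff]
    constructor
    · push_cast
      rw [← mul_le_mul_iff_of_pos_right h2d]
      linarith
    · push_cast
      rw [← mul_lt_mul_iff_of_pos_right h2d]
      linarith
  rw [rad, hfloor]
  rfl

def cst (d k : ℕ) : ℝ≥0∞ := if (k / 2 ^ d) % 2 = k % 2 then 0 else 1

lemma cst_pair {d : ℕ} (hd : 1 ≤ d) (j : ℕ) : cst d (2 * j) + cst d (2 * j + 1) = 1 := by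
  have h3 : (2 * j) / 2 ^ d = (2 * j + 1) / 2 ^ d := by
    obtain ⟨e, rfl⟩ : ∃ e, d = e + 1 := ⟨d - 1, by omega⟩
    have h2 : (2:ℕ) ^ (e + 1) = 2 * 2 ^ e := by ring
    rw [h2, ← Nat.div_div_eq_div_mul, ← Nat.div_div_eq_div_mul]
    congr 1
    omega
  have h1 : (2 * j) % 2 = 0 := by omega
  have h2 : (2 * j + 1) % 2 = 1 := by omega
  unfold cst
  rw [h3, h1, h2]
  rcases Nat.mod_two_eq_zero_or_one ((2 * j + 1) / 2 ^ d) with h | h <;> simp [h]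

lemma cst_sum {d : ℕ} (hd : 1 ≤ d) (N : ℕ) :
    ∑ k ∈ Finset.range (2 * N), cst d k = N := by
  induction N with
  | zero => simp
  | succ N ih =>
    have h : 2 * (N + 1) = (2 * N + 1) + 1 := by ring
    rw [h, Finset.sum_range_succ, Finset.sum_range_succ, ih, add_assoc, cst_pair hd]
    push_cast
    ring

lemma dyI_meas (m k : ℕ) : MeasurableSet (dyI m k) := measurableSet_Ico

lemma dyI_disj (m : ℕ) : Set.PairwiseDisjoint (↑(Finset.range (2 ^ m))) (dyI m) := by
  intro i _ j _ hij
  have key : ∀ a b : ℕ, a < b → Disjoint (dyI m a) (dyI m b) := by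
    intro a b hab
    rw [dyI, dyI, Set.Ico_disjoint_Ico]
    have : (a : ℝ) + 1 ≤ b := by exact_mod_cast hab
    refine le_trans (min_le_left _ _) (le_trans ?_ (le_max_right _ _))
    gcongr
  rcases hij.lt_or_gt with h | h
  · exact key _ _ h
  · exact (key _ _ h).symm

lemma Ico_eq_dyI (m : ℕ) : Ico (0:ℝ) 1 = ⋃ k ∈ Finset.range (2 ^ m), dyI m k := by
  have h2m : (0:ℝ) < 2 ^ m := by positivity
  ext x
  simp only [mem_iUnion, Finset.mem_range, mem_Ico, dyI]
  constructor
  · rintro ⟨hx0, hx1⟩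
    have hge : (0:ℤ) ≤ ⌊(2:ℝ) ^ m * x⌋ := Int.floor_nonneg.mpr (by positivity)
    have hlt : ⌊(2:ℝ) ^ m * x⌋ < 2 ^ m := by
      apply Int.floor_lt.mpr
      push_cast
      nlinarith
    refine ⟨⌊(2:ℝ) ^ m * x⌋.toNat, ?_, ?_, ?_⟩
    · have : (⌊(2:ℝ) ^ m * x⌋.toNat : ℤ) < 2 ^ m := by rwa [Int.toNat_of_nonneg hge]
      exact_mod_cast this
    · rw [div_le_iff₀ h2m]
      have := Int.floor_le ((2:ℝ) ^ m * x)
      rw [show ((⌊(2:ℝ) ^ m * x⌋.toNat : ℝ)) = ((⌊(2:ℝ) ^ m * x⌋ : ℤ) : ℝ) by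
        exact_mod_cast congrArg Int.cast (Int.toNat_of_nonneg hge)]
      linarith
    · rw [lt_div_iff₀ h2m]
      have := Int.lt_floor_add_one ((2:ℝ) ^ m * x)
      rw [show ((⌊(2:ℝ) ^ m * x⌋.toNat : ℝ)) = ((⌊(2:ℝ) ^ m * x⌋ : ℤ) : ℝ) by
        exact_mod_cast congrArg Int.cast (Int.toNat_of_nonneg hge)]
      linarith
  · rintro ⟨k, hk, hk1, hk2⟩
    have hkr : (k : ℝ) + 1 ≤ 2 ^ m := by exact_mod_cast hk
    constructor
    · have : (0:ℝ) ≤ (k : ℝ) / 2 ^ m := by positivity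
      linarith
    · have : ((k : ℝ) + 1) / 2 ^ m ≤ 1 := by
        rw [div_le_one h2m]; exact hkr
      linarith

lemma edist_rad {n m : ℕ} (hnm : n ≤ m) {k : ℕ} {x : ℝ} (hx : x ∈ dyI m k) :
    edist (rad n x) (rad m x) = cst (m - n) k := by
  rw [rad_on_dyI hnm hx, rad_on_dyI (le_refl m) hx]
  simp only [Nat.sub_self, pow_zero, Nat.div_one]
  rw [cst]
  rcases Nat.mod_two_eq_zero_or_one (k / 2 ^ (m - n)) with h1 | h1 <;>
    rcases Nat.mod_two_eq_zero_or_one k with h2 | h2 <;>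
      simp [h1, h2, edist_dist, Real.dist_eq]

lemma volume_dyI (m k : ℕ) : volume (dyI m k) = ENNReal.ofReal ((2 ^ m : ℝ)⁻¹) := by
  rw [dyI, Real.volume_Ico]
  congr 1
  field_simp
  ring

lemma key {n m : ℕ} (hnm : n < m) :
    ∫⁻ x in Icc (0:ℝ) 1, edist (rad n x) (rad m x) = 1 / 2 := by
  have hd : 1 ≤ m - n := by omega
  rw [← restrict_Ico_eq_restrict_Icc, Ico_eq_dyI m,
    lintegral_biUnion_finset (dyI_disj m) (fun k _ => dyI_meas m k) _]
  have hterm : ∀ k, ∫⁻ x in dyI m k, edist (rad n x) (rad m x) =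
      cst (m - n) k * ENNReal.ofReal ((2 ^ m : ℝ)⁻¹) := by
    intro k
    rw [setLIntegral_congr_fun (dyI_meas m k)
      (fun x hx => edist_rad hnm.le hx), setLIntegral_const, volume_dyI]
  simp_rw [hterm]
  rw [← Finset.sum_mul]
  have hm : 2 ^ m = 2 * 2 ^ (m - 1) := by
    rw [← pow_succ']; congr 1; omega
  rw [hm, cst_sum hd]
  have hofReal : ENNReal.ofReal ((2 ^ m : ℝ)⁻¹) = ((2 : ℝ≥0∞) ^ m)⁻¹ := by
    rw [ENNReal.ofReal_inv_of_pos (by positivity), ENNReal.ofReal_pow (by norm_num)]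
    norm_num
  rw [hofReal]
  have h2 : (2 : ℝ≥0∞) ^ m = 2 * 2 ^ (m - 1) := by
    rw [← pow_succ']; congr 1; omega
  have hne : ((2 : ℝ≥0∞) ^ (m - 1)) ≠ 0 := by positivity
  have hnt : ((2 : ℝ≥0∞) ^ (m - 1)) ≠ ⊤ :=
    ENNReal.pow_ne_top (by norm_num)
  rw [h2, ENNReal.mul_inv (Or.inl (by norm_num)) (Or.inl (by norm_num))]
  push_cast
  rw [← mul_assoc, mul_comm ((2:ℝ≥0∞) ^ (m-1)) _, mul_assoc,
    ENNReal.mul_inv_cancel hne hnt, mul_one, one_div]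

lemma vw_eq (n m : ℕ) :
    VW (volume.restrict (Icc (0:ℝ) 1)) (rho15 n) (rho15 m) =
      ∫⁻ x in Icc (0:ℝ) 1, edist (rad n x) (rad m x) := by
  rw [VW]
  apply lintegral_congr_ae
  filter_upwards [disint_ae n, disint_ae m] with x h1 h2
  rw [h1, h2, W1_dirac]

lemma vw_half {n m : ℕ} (hnm : n ≠ m) :
    VW (volume.restrict (Icc (0:ℝ) 1)) (rho15 n) (rho15 m) = 1 / 2 := by
  rw [vw_eq]
  rcases hnm.lt_or_gt with h | h
  · exact key h
  · rw [show (fun x => edist (rad n x) (rad m x)) = fun x => edist (rad m x) (rad n x) by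
      funext x; exact edist_comm _ _] at *
    exact key h

/-- the alternating sequence `(ρ^n)` lies in `Π(μ)` (first marginal
`μ = Leb ↾ [0,1]`, concentrated on `[0,1]²`), is at mutual `𝒲`-distance `1/2`, and
therefore has no `𝒲`-Cauchy subsequence, so `(Π(μ), 𝒲)` is not (sequentially) compact. -/
theorem stmt15 :
    (∀ n, 1 ≤ n → IsProbabilityMeasure (rho15 n) ∧
      (rho15 n).map Prod.fst = volume.restrict (Icc (0:ℝ) 1) ∧
      rho15 n ((Icc (0:ℝ) 1 ×ˢ Icc (0:ℝ) 1)ᶜ) = 0) ∧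
    (∀ n m : ℕ, 1 ≤ n → 1 ≤ m → n ≠ m →
      VW (volume.restrict (Icc (0:ℝ) 1)) (rho15 n) (rho15 m) = 1/2) ∧
    ¬∃ φ : ℕ → ℕ, StrictMono φ ∧ (∀ l, 1 ≤ φ l) ∧
      ∀ ε : ℝ, 0 < ε → ∃ N, ∀ k ≥ N, ∀ l ≥ N,
        VW (volume.restrict (Icc (0:ℝ) 1)) (rho15 (φ k)) (rho15 (φ l)) <
          ENNReal.ofReal ε := by
  refine ⟨fun n _ => ⟨rho15_prob n, ?_, ?_⟩, fun n m _ _ hnm => vw_half hnm, ?_⟩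
  · have := rho15_fst n
    rwa [Measure.fst] at this
  · have hmeas : MeasurableSet ((Icc (0:ℝ) 1 ×ˢ Icc (0:ℝ) 1)ᶜ) :=
      (measurableSet_Icc.prod measurableSet_Icc).compl
    rw [rho15, Measure.map_apply
      (show Measurable fun x : ℝ => (x, rad n x) from measurable_id.prodMk (rad_meas n)) hmeas,
      Measure.restrict_apply
      ((show Measurable fun x : ℝ => (x, rad n x) from measurable_id.prodMk (rad_meas n)) hmeas)]
    have : ((fun x => (x, rad n x)) ⁻¹' (Icc (0:ℝ) 1 ×ˢ Icc (0:ℝ) 1)ᶜ) ∩ Icc 0 1 = ∅ := by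
      rw [eq_empty_iff_forall_notMem]
      rintro x ⟨hx1, hx2⟩
      apply hx1
      refine ⟨hx2, ?_⟩
      rcases rad_mem n x with h | h <;> simp only [mem_Icc] <;> rw [h] <;> norm_num
    rw [this]
    simp
  · rintro ⟨φ, hφ, _, hC⟩
    obtain ⟨N, hN⟩ := hC (1/4) (by norm_num)
    have hne : φ N ≠ φ (N + 1) := (hφ (Nat.lt_succ_self N)).ne
    have h1 := hN N le_rfl (N + 1) (Nat.le_succ N)
    rw [vw_half hne] at h1
    have h2 : ENNReal.ofReal (1/4) ≤ 1/2 := by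
      rw [show ((1:ℝ≥0∞)/2) = ENNReal.ofReal (1/2) by
        rw [ENNReal.ofReal_div_of_pos (by norm_num)]; norm_num]
      exact ENNReal.ofReal_le_ofReal (by norm_num)
    exact absurd (h1.trans_le h2) (lt_irrefl _)
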